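/- Let Σ be a finite alphabet, n ≥ 1, and let (K, Enc, Dec) be a finitary messageless secret-key code over Σ with codeword length n and soundness error ε_s. Fix any γ̂ ∈ Σ^n and let p = P_sk[Enc(sk) = γ̂]. If the tamper-detection failure against the constant tampering function f(γ) = γ̂ is at most ε_t, i.e. P_sk[Dec(sk, γ̂) ≠ tampered ∧ γ̂ ≠ Enc(sk)] ≤ ε_t, then ε_s + ε_t ≥ 1 − p. In particular, if the tampering family contains all constant functions and every fixed string is a codeword with probability at most p, then soundness error and tamper-detection failure cannot both be below (1 − p)/2. -/
import Mathlib


open Finset Classical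

/-- Decoding outcomes of a messageless secret-key code. -/
inductive DecOut where
  | valid
  | invalid
  | tampered
deriving DecidableEq

/-- For a messageless secret-key code with soundness error `εs`,
fix `γ̂` and let `p = P_sk[Enc(sk) = γ̂]`. If the tamper-detection failure against the
constant tampering function `f(γ) = γ̂` is at most `εt`, then `εs + εt ≥ 1 - p`;
in particular, `εs` and `εt` cannot both be below `(1 - p)/2`. -/
theorem stmt_13
    {S K : Type} [Fintype S] [DecidableEq S] [Fintype K] [Nonempty K]
    {n : ℕ} (hn : 1 ≤ n)
    (w : K → ℝ) (hw0 : ∀ k, 0 ≤ w k) (hw1 : ∑ k, w k = 1)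
    (Enc : K → Fin n → S) (Dec : K → (Fin n → S) → DecOut)
    (γhat : Fin n → S) (εs εt p : ℝ)
    (hp : p = ∑ k, if Enc k = γhat then w k else 0)
    (hsound : ∀ γ : Fin n → S,
      (∑ k, if Dec k γ ≠ DecOut.invalid then w k else 0) ≤ εs)
    (htamper :
      (∑ k, if Dec k γhat ≠ DecOut.tampered ∧ γhat ≠ Enc k then w k else 0) ≤ εt) :
    1 - p ≤ εs + εt ∧ ¬(εs < (1 - p) / 2 ∧ εt < (1 - p) / 2) := by
  have key : (1:ℝ) ≤ p + εs + εt := by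
    have hle : ∑ k, w k ≤
        ∑ k, ((if Enc k = γhat then w k else 0)
          + ((if Dec k γhat ≠ DecOut.invalid then w k else 0)
          + (if Dec k γhat ≠ DecOut.tampered ∧ γhat ≠ Enc k then w k else 0))) := by
      apply Finset.sum_le_sum
      intro k _
      by_cases he : Enc k = γhat
      · have h1 : (0:ℝ) ≤ if Dec k γhat ≠ DecOut.invalid then w k else 0 := by
          split <;> simp [hw0 k]
        have h2 : (0:ℝ) ≤ if Dec k γhat ≠ DecOut.tampered ∧ γhat ≠ γhat then w k else 0 := by
          split <;> simp [hw0 k]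
        simp only [he, if_pos]
        linarith
      · simp only [he, if_neg, not_false_iff]
        cases hD : Dec k γhat with
        | invalid =>
          have : γhat ≠ Enc k := fun h => he h.symm
          simp [hD, this, hw0 k]
        | valid =>
          have : γhat ≠ Enc k := fun h => he h.symm
          simp [hD, this, hw0 k]
        | tampered =>
          simp [hD, hw0 k]
    rw [hw1, Finset.sum_add_distrib, Finset.sum_add_distrib] at hle
    calc (1:ℝ) ≤ _ := hle
      _ ≤ p + εs + εt := by
        rw [hp]
        have := hsound γhat
        linarith
  constructor
  · linarith
  · rintro ⟨h1, h2⟩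
    linarith
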